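/- In the linear-orthogonal setting, for every α ∈ [0,1] and every μ ∈ ℝ, the fixed-focus soft-attention population loss along the ansatz direction satisfies L^{FF,SA}_α( μ D ) = log( 1 + (C−1) exp(−α μ) ). Consequently, for α > 0, L^{FF,SA}_α( μ D ) is strictly decreasing in μ and tends to 0 as μ → ∞. -/

import Mathlib

open scoped RealInnerProductSpace BigOperators
open MeasureTheory Filter

/-- Softmax of a finite family of reals. -/
noncomputable def softmax {ι : Type*} [Fintype ι] (z : ι → ℝ) (k : ι) : ℝ :=
  Real.exp (z k) / ∑ l, Real.exp (z l)

lemma softmax_log_aux (C : ℕ) (hC : 2 ≤ C) (y : Fin C) (t : ℝ) (z : Fin C → ℝ)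
    (hz : ∀ i, z i = (if i = y then t else 0) - t / C) :
    -Real.log (softmax z y) = Real.log (1 + ((C : ℝ) - 1) * Real.exp (-t)) := by
  have hsum : ∑ l, Real.exp (z l) = (Real.exp t + ((C : ℝ) - 1)) * Real.exp (-(t / C)) := by
    have : ∀ l : Fin C, Real.exp (z l) =
        (1 + (if l = y then Real.exp t - 1 else 0)) * Real.exp (-(t / C)) := by
      intro l
      rw [hz l, sub_eq_add_neg, Real.exp_add]
      congr 1
      split_ifs <;> simp [Real.exp_zero]
    rw [Finset.sum_congr rfl fun l _ => this l, ← Finset.sum_mul, Finset.sum_add_distrib,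
      Finset.sum_ite_eq' Finset.univ y]
    simp only [Finset.mem_univ, if_true, Finset.sum_const, Finset.card_univ, Fintype.card_fin,
      nsmul_eq_mul, mul_one]
    ring
  have hzy : Real.exp (z y) = Real.exp t * Real.exp (-(t / C)) := by
    rw [hz y, if_pos rfl, sub_eq_add_neg, Real.exp_add]
  have hpos : (0 : ℝ) < Real.exp t + ((C : ℝ) - 1) := by
    have : (1 : ℝ) ≤ (C : ℝ) := by exact_mod_cast Nat.one_le_of_lt hC
    nlinarith [Real.exp_pos t]
  have hsm : softmax z y = Real.exp t / (Real.exp t + ((C : ℝ) - 1)) := by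
    unfold softmax
    rw [hsum, hzy, mul_div_mul_right _ _ (Real.exp_ne_zero _)]
  rw [hsm, Real.log_div (Real.exp_ne_zero _) (ne_of_gt hpos), neg_sub,
    Real.log_exp]
  have h2 : 1 + ((C : ℝ) - 1) * Real.exp (-t) =
      (Real.exp t + ((C : ℝ) - 1)) / Real.exp t := by
    rw [Real.exp_neg]
    field_simp
  rw [h2, Real.log_div (ne_of_gt hpos) (Real.exp_ne_zero _), Real.log_exp]

/-- in the linear-orthogonal setting, along the ansatz direction `D` the
fixed-focus soft-attention population loss equals `log(1 + (C−1)exp(−αμ))`; for `α > 0` it is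
strictly decreasing in `μ` and tends to `0` as `μ → ∞`. -/
theorem fixed_focus_soft_attention_loss_along_ansatz
    (d C m : ℕ) (hd : 1 ≤ d) (hC : 2 ≤ C) (hm : 2 ≤ m)
    (s : Fin C → EuclideanSpace ℝ (Fin d)) (hs : Orthonormal ℝ s)
    (ρ : Measure (EuclideanSpace ℝ (Fin d))) [IsProbabilityMeasure ρ]
    (hρ_int : Integrable (fun x => x) ρ)
    (hρ_mean : ∫ x, x ∂ρ = 0)
    (hρ_orth : ∀ᵐ x ∂ρ, ∀ k, ⟪x, s k⟫ = 0)
    (α : ℝ) (hα : α ∈ Set.Icc (0 : ℝ) 1)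
    (D : Fin C → EuclideanSpace ℝ (Fin d))
    (hD : ∀ k, D k = s k - (C : ℝ)⁻¹ • ∑ k', s k')
    (L : (Fin C → EuclideanSpace ℝ (Fin d)) → ℝ)
    (hL : ∀ W, L W = (C : ℝ)⁻¹ * ∑ y : Fin C,
      ∫ b : Fin (m - 1) → EuclideanSpace ℝ (Fin d),
        -Real.log (softmax (fun i =>
          ⟪W i, α • s y + ((1 - α) / ((m : ℝ) - 1)) • ∑ j, b j⟫) y)
        ∂(Measure.pi fun _ => ρ)) :
    (∀ μ : ℝ, L (μ • D) = Real.log (1 + (C - 1) * Real.exp (-(α * μ)))) ∧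
    (0 < α → StrictAnti (fun μ : ℝ => L (μ • D)) ∧
      Tendsto (fun μ : ℝ => L (μ • D)) atTop (nhds 0)) := by
  have hCpos : (0 : ℝ) < (C : ℝ) := by exact_mod_cast Nat.lt_of_lt_of_le Nat.zero_lt_two hC
  have hC1 : (0 : ℝ) < (C : ℝ) - 1 := by
    have : (2 : ℝ) ≤ (C : ℝ) := by exact_mod_cast hC
    linarith
  have key : ∀ μ : ℝ, L (μ • D) = Real.log (1 + ((C : ℝ) - 1) * Real.exp (-(α * μ))) := by
    intro μ
    rw [hL]
    have hconst : ∀ y : Fin C,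
        (∫ b : Fin (m - 1) → EuclideanSpace ℝ (Fin d),
          -Real.log (softmax (fun i =>
            ⟪(μ • D) i, α • s y + ((1 - α) / ((m : ℝ) - 1)) • ∑ j, b j⟫) y)
          ∂(Measure.pi fun _ => ρ)) = Real.log (1 + ((C : ℝ) - 1) * Real.exp (-(α * μ))) := by
      intro y
      have hae : ∀ᵐ b ∂(Measure.pi fun _ : Fin (m - 1) => ρ),
          ∀ j, ∀ k, ⟪b j, s k⟫ = 0 :=
        eventually_all.2 fun j => (Measure.tendsto_eval_ae_ae (μ := fun _ : Fin (m - 1) => ρ) (i := j)).eventually hρ_orth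
      have heq : (fun b : Fin (m - 1) → EuclideanSpace ℝ (Fin d) =>
          -Real.log (softmax (fun i =>
            ⟪(μ • D) i, α • s y + ((1 - α) / ((m : ℝ) - 1)) • ∑ j, b j⟫) y))
          =ᵐ[Measure.pi fun _ : Fin (m - 1) => ρ]
          (fun _ => Real.log (1 + ((C : ℝ) - 1) * Real.exp (-(α * μ)))) := by
        filter_upwards [hae] with b hb
        refine softmax_log_aux C hC y (α * μ) _ (fun i => ?_)
        have hDb : ∀ x : EuclideanSpace ℝ (Fin d), (∀ k, ⟪x, s k⟫ = 0) → ⟪D i, x⟫ = 0 := by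
          intro x hx
          rw [hD i, inner_sub_left, real_inner_smul_left, sum_inner]
          simp [real_inner_comm x, hx]
        have hDs : ⟪D i, s y⟫ = (if i = y then 1 else 0) - (C : ℝ)⁻¹ := by
          rw [hD i, inner_sub_left, real_inner_smul_left, sum_inner]
          have h1 : ∀ k' : Fin C, ⟪s k', s y⟫ = if k' = y then (1 : ℝ) else 0 :=
            fun k' => orthonormal_iff_ite.mp hs k' y
          rw [Finset.sum_congr rfl fun k' _ => h1 k', Finset.sum_ite_eq' Finset.univ y]
          have h2 : ⟪s i, s y⟫ = if i = y then (1 : ℝ) else 0 := orthonormal_iff_ite.mp hs i y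
          simp [h2]
        have : ⟪(μ • D) i, α • s y + ((1 - α) / ((m : ℝ) - 1)) • ∑ j, b j⟫
            = μ * (α * ((if i = y then 1 else 0) - (C : ℝ)⁻¹)) := by
          have hsumb : ⟪D i, ∑ j, b j⟫ = 0 := by
            rw [inner_sum]
            exact Finset.sum_eq_zero fun j _ => hDb (b j) (hb j)
          rw [Pi.smul_apply, real_inner_smul_left, inner_add_right, real_inner_smul_right,
            real_inner_smul_right, hsumb, hDs, mul_zero, add_zero]
        rw [this]
        split_ifs with h
        · field_simp
        · simp only [zero_sub, mul_neg, div_eq_mul_inv]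
          ring
      rw [integral_congr_ae heq, integral_const]
      simp
    rw [Finset.sum_congr rfl fun y _ => hconst y, Finset.sum_const, Finset.card_univ,
      Fintype.card_fin, nsmul_eq_mul, ← mul_assoc, inv_mul_cancel₀ (ne_of_gt hCpos), one_mul]
  refine ⟨fun μ => key μ, fun hα0 => ⟨?_, ?_⟩⟩
  · intro a b hab
    simp only [key]
    have h1 : Real.exp (-(α * b)) < Real.exp (-(α * a)) := by
      apply Real.exp_lt_exp.2
      nlinarith
    have hpos : ∀ x : ℝ, (0 : ℝ) < 1 + ((C : ℝ) - 1) * Real.exp (-(α * x)) := fun x => by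
      nlinarith [Real.exp_pos (-(α * x))]
    exact Real.log_lt_log (hpos b) (by nlinarith)
  · have h1 : Tendsto (fun μ : ℝ => 1 + ((C : ℝ) - 1) * Real.exp (-(α * μ))) atTop (nhds 1) := by
      have h2 : Tendsto (fun μ : ℝ => -(α * μ)) atTop atBot := by
        apply tendsto_neg_atBot_iff.2
        exact (tendsto_const_mul_atTop_of_pos hα0).2 tendsto_id
      have h3 : Tendsto (fun μ : ℝ => ((C : ℝ) - 1) * Real.exp (-(α * μ))) atTop (nhds 0) := by
        simpa using (Real.tendsto_exp_atBot.comp h2).const_mul ((C : ℝ) - 1)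
      simpa using (tendsto_const_nhds (x := (1 : ℝ))).add h3
    have := (Real.continuousAt_log (by norm_num : (1 : ℝ) ≠ 0)).tendsto.comp h1
    simp only [Function.comp, Real.log_one] at this
    convert this using 1
    funext μ
    exact key μ
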